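/- Let f be a monotone boolean function computed by a decision tree of depth d whose root queries variable x, with subfunctions f_0 (x=0 branch) and f_1 (x=1 branch). If neither f_0 nor f_1 is constant, then C⁰_min(f_0) + C¹_min(f_1) ≤ |R(f_0) ∩ R(f_1)| + 1. -/

import Mathlib

open Finset
open scoped Classical

namespace BF

noncomputable section

/-- flip the bits of `x` belonging to `B`. -/
def flipS {n : ℕ} (x : Fin n → Bool) (B : Finset (Fin n)) : Fin n → Bool :=
  fun i => if i ∈ B then !(x i) else x i

/-- flip the `i`-th bit of `x`. -/
def flip1 {n : ℕ} (x : Fin n → Bool) (i : Fin n) : Fin n → Bool :=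
  fun j => if j = i then !(x j) else x j

/-- real value of a boolean. -/
def bval (b : Bool) : ℝ := if b then 1 else 0

/-- coefficient of the monomial `∏_{i ∈ S} x_i` in the unique multilinear
real polynomial expansion of `f` (Möbius inversion over the subcube lattice). -/
def coeffS {n : ℕ} (f : (Fin n → Bool) → ℝ) (S : Finset (Fin n)) : ℝ :=
  ∑ T ∈ S.powerset, (-1 : ℝ) ^ (S.card - T.card) * f (fun i => decide (i ∈ T))

/-- degree of the multilinear expansion of a real-valued function on the cube. -/
def degF {n : ℕ} (f : (Fin n → Bool) → ℝ) : ℕ :=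
  (Finset.univ.filter fun S : Finset (Fin n) => coeffS f S ≠ 0).sup Finset.card

/-- degree of a boolean function. -/
def degB {n : ℕ} (f : (Fin n → Bool) → Bool) : ℕ := degF (fun x => bval (f x))

/-- block sensitivity of `f` at `x`. -/
def bsAt {n : ℕ} (f : (Fin n → Bool) → Bool) (x : Fin n → Bool) : ℕ :=
  (Finset.univ.filter fun 𝓑 : Finset (Finset (Fin n)) =>
      (∀ B ∈ 𝓑, f (flipS x B) ≠ f x) ∧
      ∀ A ∈ 𝓑, ∀ B ∈ 𝓑, A ≠ B → Disjoint A B).sup Finset.card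

/-- block sensitivity of `f`. -/
def bs {n : ℕ} (f : (Fin n → Bool) → Bool) : ℕ := Finset.univ.sup (bsAt f)

/-- sensitivity of `f` at `x`. -/
def sx {n : ℕ} (f : (Fin n → Bool) → Bool) (x : Fin n → Bool) : ℕ :=
  (Finset.univ.filter fun i => f (flip1 x i) ≠ f x).card

/-- (maximum) sensitivity of `f`. -/
def sens {n : ℕ} (f : (Fin n → Bool) → Bool) : ℕ := Finset.univ.sup (sx f)

/-- coordinate `i` is relevant for `f`. -/
def Rel {n : ℕ} (i : Fin n) (f : (Fin n → Bool) → Bool) : Prop :=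
  ∃ x, f (flip1 x i) ≠ f x

/-- the set of relevant coordinates of `f`. -/
def relSet {n : ℕ} (f : (Fin n → Bool) → Bool) : Finset (Fin n) :=
  Finset.univ.filter fun i => Rel i f

/-- the number of relevant variables `n(f)`. -/
def nrel {n : ℕ} (f : (Fin n → Bool) → Bool) : ℕ := (relSet f).card

/-- influence of coordinate `i` on `f` (uniform distribution). -/
def infl {n : ℕ} (f : (Fin n → Bool) → Bool) (i : Fin n) : ℝ :=
  ((Finset.univ.filter fun x : Fin n → Bool => f x ≠ f (flip1 x i)).card : ℝ) / 2 ^ n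

/-- total influence `I[f]`. -/
def totalInf {n : ℕ} (f : (Fin n → Bool) → Bool) : ℝ := ∑ i, infl f i

/-- restriction of `f` fixing the coordinates in `H` according to `α`
(viewed as a function on the full cube not depending on the coordinates in `H`). -/
def restrict {n : ℕ} (f : (Fin n → Bool) → Bool) (H : Finset (Fin n))
    (α : Fin n → Bool) : (Fin n → Bool) → Bool :=
  fun x => f (fun i => if i ∈ H then α i else x i)

/-- certificate complexity of `f` at `x`. -/
def certAt {n : ℕ} (f : (Fin n → Bool) → Bool) (x : Fin n → Bool) : ℕ :=
  sInf {k | ∃ S : Finset (Fin n), S.card = k ∧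
    ∀ y, (∀ i ∈ S, y i = x i) → f y = f x}

/-- certificate complexity `C(f)`. -/
def certC {n : ℕ} (f : (Fin n → Bool) → Bool) : ℕ := Finset.univ.sup (certAt f)

/-- `f` is in standard form: `f(0) = 0` and `f(e_i) = 1` for every basis vector. -/
def stdForm {b : ℕ} (f : (Fin b → Bool) → Bool) : Prop :=
  f (fun _ => false) = false ∧ ∀ i : Fin b, f (fun j => decide (j = i)) = true

end

end BF

open BF

/-- `C^b_min(g)`: the minimum, over inputs `y` with `g(y) = b`, of the size of a
smallest certificate of `g` at `y`. -/
noncomputable def cminVal {n : ℕ} (b : Bool) (g : (Fin n → Bool) → Bool) : ℕ :=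
  sInf {k | ∃ y : Fin n → Bool, ∃ S : Finset (Fin n), g y = b ∧ S.card = k ∧
    ∀ z, (∀ i ∈ S, z i = y i) → g z = b}

/-- if two inputs agree on the relevant set, the function values agree (aux). -/
lemma eq_of_agree_aux {n : ℕ} (g : (Fin n → Bool) → Bool) :
    ∀ (m : ℕ) (w w' : Fin n → Bool), (∀ i ∈ relSet g, w i = w' i) →
      (Finset.univ.filter fun i => w i ≠ w' i).card ≤ m → g w = g w' := by
  intro m
  induction m with
  | zero =>
    intro w w' hag hcard
    have hD : (Finset.univ.filter fun i => w i ≠ w' i) = ∅ :=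
      Finset.card_eq_zero.mp (Nat.le_zero.mp hcard)
    have : w = w' := by
      funext i
      by_contra hne
      have hi : i ∈ Finset.univ.filter fun i => w i ≠ w' i := by
        simp [hne]
      rw [hD] at hi
      exact absurd hi (Finset.notMem_empty i)
    rw [this]
  | succ m ih =>
    intro w w' hag hcard
    by_cases hD : (Finset.univ.filter fun i => w i ≠ w' i) = ∅
    · have : w = w' := by
        funext i
        by_contra hne
        have hi : i ∈ Finset.univ.filter fun i => w i ≠ w' i := by simp [hne]
        rw [hD] at hi
        exact absurd hi (Finset.notMem_empty i)
      rw [this]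
    · obtain ⟨i, hi⟩ := Finset.nonempty_iff_ne_empty.mpr hD
      have hiw : w i ≠ w' i := by simpa using hi
      have hirr : i ∉ relSet g := fun h => hiw (hag i h)
      have hnotrel : ∀ x, g (flip1 x i) = g x := by
        intro x
        by_contra hx
        exact hirr (Finset.mem_filter.mpr ⟨Finset.mem_univ _, x, hx⟩)
      have hflip : g w = g (flip1 w i) := (hnotrel w).symm
      rw [hflip]
      apply ih
      · intro j hj
        by_cases hji : j = i
        · exact absurd (hji ▸ hj) hirr
        · simpa [flip1, hji] using hag j hj
      · have hsub : (Finset.univ.filter fun j => flip1 w i j ≠ w' j) ⊆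
            (Finset.univ.filter fun j => w j ≠ w' j).erase i := by
          intro j hj
          simp only [Finset.mem_filter, Finset.mem_univ, true_and] at hj
          by_cases hji : j = i
          · subst hji
            exfalso
            apply hj
            simp only [flip1, if_pos rfl]
            revert hiw; cases w j <;> cases w' j <;> decide
          · refine Finset.mem_erase.mpr ⟨hji, ?_⟩
            simp only [Finset.mem_filter, Finset.mem_univ, true_and]
            simpa [flip1, hji] using hj
        calc (Finset.univ.filter fun j => flip1 w i j ≠ w' j).card
            ≤ ((Finset.univ.filter fun j => w j ≠ w' j).erase i).card :=
              Finset.card_le_card hsub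
          _ = (Finset.univ.filter fun j => w j ≠ w' j).card - 1 :=
              Finset.card_erase_of_mem hi
          _ ≤ m := by omega

lemma eq_of_agree {n : ℕ} (g : (Fin n → Bool) → Bool) (w w' : Fin n → Bool)
    (h : ∀ i ∈ relSet g, w i = w' i) : g w = g w' :=
  eq_of_agree_aux g _ w w' h le_rfl

/-- for a monotone `f` with subfunctions `f₀ = f_{x_k=0}` and
`f₁ = f_{x_k=1}` at the root variable `x_k`, if neither is constant then
`C⁰_min(f₀) + C¹_min(f₁) ≤ |R(f₀) ∩ R(f₁)| + 1`. -/
theorem stmt17 {n : ℕ} (f : (Fin n → Bool) → Bool) (hmono : Monotone f)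
    (k : Fin n)
    (f0 f1 : (Fin n → Bool) → Bool)
    (hf0 : f0 = restrict f {k} (fun _ => false))
    (hf1 : f1 = restrict f {k} (fun _ => true))
    (h0 : ∃ x y, f0 x ≠ f0 y) (h1 : ∃ x y, f1 x ≠ f1 y) :
    cminVal false f0 + cminVal true f1 ≤ (relSet f0 ∩ relSet f1).card + 1 := by
  classical
  -- monotonicity of the subfunctions and f0 ≤ f1
  have hm0 : Monotone f0 := by
    rw [hf0]
    intro x y hxy
    apply hmono
    intro i
    simp only [BF.restrict]
    split
    · exact le_rfl
    · exact hxy i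
  have hm1 : Monotone f1 := by
    rw [hf1]
    intro x y hxy
    apply hmono
    intro i
    simp only [BF.restrict]
    split
    · exact le_rfl
    · exact hxy i
  have h01 : ∀ x, f0 x ≤ f1 x := by
    intro x
    rw [hf0, hf1]
    simp only [BF.restrict]
    apply hmono
    intro i
    simp only
    split
    · exact Bool.false_le _
    · exact le_rfl
  set I : Finset (Fin n) := relSet f0 ∩ relSet f1 with hI
  -- key claim: every assignment to I forces f0 = 0 or forces f1 = 1
  have key : ∀ α : Fin n → Bool,
      (∀ y, (∀ i ∈ I, y i = α i) → f0 y = false) ∨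
      (∀ z, (∀ i ∈ I, z i = α i) → f1 z = true) := by
    intro α
    by_contra hc
    push_neg at hc
    obtain ⟨⟨y, hyα, hy⟩, ⟨z, hzα, hz⟩⟩ := hc
    replace hy : f0 y = true := by simpa using hy
    replace hz : f1 z = false := by simpa using hz
    set u : Fin n → Bool := fun i => if i ∈ relSet f0 then y i else z i with hu
    have h0u : f0 u = f0 y := by
      apply eq_of_agree
      intro i hi
      simp [hu, hi]
    have h1u : f1 u = f1 z := by
      apply eq_of_agree
      intro i hi
      by_cases h' : i ∈ relSet f0
      · have hiI : i ∈ I := Finset.mem_inter.mpr ⟨h', hi⟩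
        simp [hu, h', hyα i hiI, hzα i hiI]
      · simp [hu, h']
    have hle := h01 u
    rw [h0u, h1u, hy, hz] at hle
    exact absurd hle (by decide)
  -- the family of subsets of I whose indicator forces f0 = 0
  set T : Finset (Finset (Fin n)) := I.powerset.filter
      (fun S => ∀ y, (∀ i ∈ I, y i = decide (i ∈ S)) → f0 y = false) with hT
  have hemp : ∅ ∈ T := by
    rw [hT, Finset.mem_filter]
    refine ⟨Finset.mem_powerset.mpr (Finset.empty_subset I), ?_⟩
    rcases key (fun _ => false) with hk | hk
    · intro y hy
      apply hk
      intro i hi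
      simpa using hy i hi
    · exfalso
      have hall : ∀ x, f1 x = true := by
        intro x
        have h0 : f1 (fun _ => false) = true := hk _ (fun i _ => rfl)
        have : f1 (fun _ => false) ≤ f1 x := hm1 (fun i => Bool.false_le _)
        rw [h0] at this
        exact le_antisymm (Bool.le_true _) this
      obtain ⟨a, b, hab⟩ := h1
      exact hab (by rw [hall a, hall b])
  obtain ⟨S, hST, hSmax⟩ := Finset.exists_max_image T Finset.card ⟨∅, hemp⟩
  rw [hT, Finset.mem_filter] at hST
  obtain ⟨hSpow, hSforce⟩ := hST
  have hSsub : S ⊆ I := Finset.mem_powerset.mp hSpow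
  -- S ≠ I
  have hSne : S ≠ I := by
    intro hSeq
    have hone : f0 (fun _ => true) = false := by
      apply hSforce
      intro i hi
      simp [hSeq, hi]
    have hall : ∀ x, f0 x = false := by
      intro x
      have : f0 x ≤ f0 (fun _ => true) := hm0 (fun i => Bool.le_true _)
      rw [hone] at this
      exact le_antisymm this (Bool.false_le _)
    obtain ⟨a, b, hab⟩ := h0
    exact hab (by rw [hall a, hall b])
  obtain ⟨j, hjI, hjS⟩ := Finset.exists_of_ssubset (lt_of_le_of_ne hSsub hSne)
  -- insert j S forces f1 = 1
  have hforce1 : ∀ z, (∀ i ∈ I, z i = decide (i ∈ insert j S)) → f1 z = true := by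
    rcases key (fun i => decide (i ∈ insert j S)) with hk | hk
    · exfalso
      have hmem : insert j S ∈ T := by
        rw [hT, Finset.mem_filter]
        exact ⟨Finset.mem_powerset.mpr (Finset.insert_subset hjI hSsub), hk⟩
      have := hSmax _ hmem
      rw [Finset.card_insert_of_notMem hjS] at this
      omega
    · exact hk
  -- bound on cminVal false f0
  have hb0 : cminVal false f0 ≤ (I \ S).card := by
    apply Nat.sInf_le
    refine ⟨fun i => !decide (i ∈ I \ S), I \ S, ?_, rfl, ?_⟩
    · apply hSforce
      intro i hi
      by_cases hiS : i ∈ S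
      · simp [hiS, Finset.mem_sdiff]
      · simp [hiS, Finset.mem_sdiff, hi]
    · intro z hz
      have hzle : z ≤ fun i => !decide (i ∈ I \ S) := by
        intro i
        by_cases hi : i ∈ I \ S
        · rw [hz i hi]
        · simp only [hi, decide_false, Bool.not_false]
          exact Bool.le_true _
      have hle : f0 z ≤ f0 (fun i => !decide (i ∈ I \ S)) := hm0 hzle
      have hv : f0 (fun i => !decide (i ∈ I \ S)) = false := by
        apply hSforce
        intro i hi
        by_cases hiS : i ∈ S
        · simp [hiS, Finset.mem_sdiff]
        · simp [hiS, Finset.mem_sdiff, hi]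
      rw [hv] at hle
      exact le_antisymm hle (Bool.false_le _)
  -- bound on cminVal true f1
  have hb1 : cminVal true f1 ≤ (insert j S).card := by
    apply Nat.sInf_le
    refine ⟨fun i => decide (i ∈ insert j S), insert j S, ?_, rfl, ?_⟩
    · exact hforce1 _ (fun i _ => rfl)
    · intro z hz
      have hyle : (fun i => decide (i ∈ insert j S)) ≤ z := by
        intro i
        by_cases hi : i ∈ insert j S
        · simp [hi, hz i hi]
        · simp [hi]
      have hle : f1 (fun i => decide (i ∈ insert j S)) ≤ f1 z := hm1 hyle
      have hv : f1 (fun i => decide (i ∈ insert j S)) = true :=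
        hforce1 _ (fun i _ => rfl)
      rw [hv] at hle
      exact le_antisymm (Bool.le_true _) hle
  have hcards : (I \ S).card = I.card - S.card := Finset.card_sdiff_of_subset hSsub
  have hcardle : S.card ≤ I.card := Finset.card_le_card hSsub
  have hcardins : (insert j S).card = S.card + 1 := Finset.card_insert_of_notMem hjS
  calc cminVal false f0 + cminVal true f1 ≤ (I \ S).card + (insert j S).card :=
        Nat.add_le_add hb0 hb1
    _ ≤ I.card + 1 := by omega
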